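/- The generating function for bicolored Motzkin paths of length $k$ with boundary weights is $V_k(\alpha,\beta) = \sum_{i=0}^{k} \sum_{j=0}^{k-i} C^{k-1}_{k-i-j} \alpha^{-i}\beta^{-j}$, where $C^n_k$ are ballot numbers. -/

import Mathlib

open scoped Classical

/-- Ballot numbers `C^n_k = C(n+k, n) - C(n+k, n+1)`. -/
def ballot (n k : ℕ) : ℕ := (n + k).choose n - (n + k).choose (n + 1)

/-- Steps of a bicolored Motzkin path: up, down, and two colors of horizontal. -/
inductive MStep : Type
  | U : MStep
  | D : MStep
  | H1 : MStep
  | H2 : MStep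
  deriving DecidableEq

instance instFintypeMStep : Fintype MStep :=
  ⟨{MStep.U, MStep.D, MStep.H1, MStep.H2}, fun x => by cases x <;> simp⟩

/-- Height change of a step. -/
def MStep.ht : MStep → ℤ
  | .U => 1
  | .D => -1
  | .H1 => 0
  | .H2 => 0

/-- Total height change of a list of steps. -/
def htSum (l : List MStep) : ℤ := (l.map MStep.ht).sum

/-- A list of steps is a bicolored Motzkin path if it never goes below the
`x`-axis and ends at height `0`. -/
def IsMotzkin (l : List MStep) : Prop :=
  (∀ i : ℕ, 0 ≤ htSum (l.take i)) ∧ htSum l = 0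

/-- The weight of a path, carried out from the starting height `h` and a flag
`sb` recording whether a `β`-weighted step (second-color horizontal step on the
axis) has already occurred.  Each second-color horizontal step on the axis
contributes `1/β`; each up-step from the axis and each first-color horizontal
step on the axis contributes `1/α`, except when it is to the right of a
`β`-weighted step. -/
def pathWeight (α β : ℚ) : ℤ → Bool → List MStep → ℚ
  | _, _, [] => 1
  | h, sb, (MStep.U :: rest) =>
      (if h = 0 ∧ sb = false then α⁻¹ else 1) * pathWeight α β (h + 1) sb rest
  | h, sb, (MStep.D :: rest) => pathWeight α β (h - 1) sb rest
  | h, sb, (MStep.H1 :: rest) =>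
      (if h = 0 ∧ sb = false then α⁻¹ else 1) * pathWeight α β h sb rest
  | h, sb, (MStep.H2 :: rest) =>
      if h = 0 then β⁻¹ * pathWeight α β h true rest
      else pathWeight α β h sb rest

/-- The generating function `V_k(α,β)` of bicolored Motzkin paths of length `k`
with the boundary weights described above. -/
noncomputable def V (k : ℕ) (α β : ℚ) : ℚ :=
  ∑ f : Fin k → MStep,
    if IsMotzkin (List.ofFn f) then pathWeight α β 0 false (List.ofFn f) else 0


namespace VProof

open Finset

/-- validity of a path from starting height `h`. -/
def valid (h : ℤ) (l : List MStep) : Prop :=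
  (∀ i : ℕ, 0 ≤ h + htSum (l.take i)) ∧ h + htSum l = 0

noncomputable def Wsum (α β : ℚ) (k : ℕ) (h : ℤ) (sb : Bool) : ℚ :=
  ∑ f : Fin k → MStep,
    if valid h (List.ofFn f) then pathWeight α β h sb (List.ofFn f) else 0

@[simp] lemma htSum_nil : htSum [] = 0 := rfl

@[simp] lemma htSum_cons (s : MStep) (l : List MStep) :
    htSum (s :: l) = s.ht + htSum l := by
  simp [htSum]

lemma valid_cons {h : ℤ} (hh : 0 ≤ h) (s : MStep) (l : List MStep) :
    valid h (s :: l) ↔ valid (h + s.ht) l := by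
  constructor
  · rintro ⟨h1, h2⟩
    refine ⟨fun i => ?_, by have := h2; simp at this; linarith⟩
    have := h1 (i + 1)
    simp [List.take_succ_cons] at this
    linarith
  · rintro ⟨h1, h2⟩
    refine ⟨fun i => ?_, by simp; linarith⟩
    cases i with
    | zero => simpa using hh
    | succ i =>
      have := h1 i
      simp [List.take_succ_cons]
      linarith

lemma Wsum_zero (α β : ℚ) (h : ℤ) (sb : Bool) :
    Wsum α β 0 h sb = if h = 0 then 1 else 0 := by
  rw [Wsum]
  rw [Fintype.sum_eq_single (fun i : Fin 0 => i.elim0) (fun f hf =>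
    (hf (funext fun i => i.elim0)).elim)]
  have : List.ofFn (fun i : Fin 0 => i.elim0 (α := MStep)) = [] := by simp
  rw [this]
  by_cases hz : h = 0
  · subst hz
    rw [if_pos ⟨fun i => by simp, by simp⟩, if_pos rfl]
    rfl
  · rw [if_neg, if_neg hz]
    rintro ⟨-, h2⟩
    simp at h2; exact hz h2

lemma sum_MStep (g : MStep → ℚ) :
    ∑ s : MStep, g s = g .U + g .D + g .H1 + g .H2 := by
  rw [show (Finset.univ : Finset MStep) = {.U, .D, .H1, .H2} from rfl]
  rw [Finset.sum_insert (by decide), Finset.sum_insert (by decide),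
    Finset.sum_insert (by decide), Finset.sum_singleton]
  ring

lemma Wsum_succ (α β : ℚ) (k : ℕ) (h : ℤ) (sb : Bool) (hh : 0 ≤ h) :
    Wsum α β (k+1) h sb =
      (if h = 0 ∧ sb = false then α⁻¹ else 1) * Wsum α β k (h+1) sb
      + Wsum α β k (h-1) sb
      + (if h = 0 ∧ sb = false then α⁻¹ else 1) * Wsum α β k h sb
      + (if h = 0 then β⁻¹ * Wsum α β k h true else Wsum α β k h sb) := by
  rw [Wsum, ← Equiv.sum_comp (Fin.consEquiv (fun _ => MStep))
    (fun f => if valid h (List.ofFn f) then pathWeight α β h sb (List.ofFn f) else 0)]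
  rw [Fintype.sum_prod_type]
  have hofn : ∀ (s : MStep) (f : Fin k → MStep),
      List.ofFn ((Fin.consEquiv (fun _ => MStep)) (s, f)) = s :: List.ofFn f := by
    intro s f
    simp [Fin.consEquiv, List.ofFn_succ]
  rw [sum_MStep]
  simp only [hofn]
  congr 1
  · congr 1
    · congr 1
      · -- U step
        rw [Wsum, Finset.mul_sum]
        refine Finset.sum_congr rfl fun f _ => ?_
        by_cases hv : valid (h + 1) (List.ofFn f)
        · rw [if_pos, if_pos hv, pathWeight]
          exact (valid_cons hh _ _).2 (by simpa [MStep.ht] using hv)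
        · rw [if_neg, if_neg hv, mul_zero]
          rw [valid_cons hh]
          simpa [MStep.ht] using hv
      · -- D step
        rw [Wsum]
        refine Finset.sum_congr rfl fun f _ => ?_
        by_cases hv : valid (h - 1) (List.ofFn f)
        · rw [if_pos, if_pos hv, pathWeight]
          exact (valid_cons hh _ _).2 (by simpa [MStep.ht, sub_eq_add_neg] using hv)
        · rw [if_neg, if_neg hv]
          rw [valid_cons hh]
          simpa [MStep.ht, sub_eq_add_neg] using hv
    · -- H1 step
      rw [Wsum, Finset.mul_sum]
      refine Finset.sum_congr rfl fun f _ => ?_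
      by_cases hv : valid h (List.ofFn f)
      · rw [if_pos, if_pos hv, pathWeight]
        exact (valid_cons hh _ _).2 (by simpa [MStep.ht] using hv)
      · rw [if_neg, if_neg hv, mul_zero]
        rw [valid_cons hh]
        simpa [MStep.ht] using hv
  · -- H2 step
    by_cases hz : h = 0
    · rw [if_pos hz, Wsum, Finset.mul_sum]
      refine Finset.sum_congr rfl fun f _ => ?_
      by_cases hv : valid h (List.ofFn f)
      · rw [if_pos, pathWeight, if_pos hz, if_pos hv]
        exact (valid_cons hh _ _).2 (by simpa [MStep.ht] using hv)
      · rw [if_neg, if_neg hv, mul_zero]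
        rw [valid_cons hh]
        simpa [MStep.ht] using hv
    · rw [if_neg hz, Wsum]
      refine Finset.sum_congr rfl fun f _ => ?_
      by_cases hv : valid h (List.ofFn f)
      · rw [if_pos, pathWeight, if_neg hz, if_pos hv]
        exact (valid_cons hh _ _).2 (by simpa [MStep.ht] using hv)
      · rw [if_neg, if_neg hv]
        rw [valid_cons hh]
        simpa [MStep.ht] using hv

end VProof
namespace VProof
open Finset

lemma choose_anti {M i : ℕ} (h : M ≤ 2 * i + 1) :
    M.choose (i + 1) ≤ M.choose i := by
  rcases Nat.lt_or_ge M (i + 1) with hM | hM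
  · simp [Nat.choose_eq_zero_of_lt hM]
  rcases Nat.eq_or_lt_of_le h with hEq | hlt
  · -- M = 2i+1
    have : M.choose (i+1) = M.choose i := by
      have := Nat.choose_symm_half i
      rw [show 2 * i + 1 = M from hEq.symm] at this
      exact this
    omega
  · -- M ≤ 2i
    have hM2 : M ≤ 2 * i := by omega
    have hiM : i ≤ M := by omega
    calc M.choose (i+1) = M.choose (M - (i+1)) := (Nat.choose_symm hM).symm
      _ ≤ M.choose (M - (i+1) + 1) := by
          apply Nat.choose_le_succ_of_lt_half_left
          omega
      _ = M.choose (M - i) := by congr 1; omega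
      _ = M.choose i := Nat.choose_symm hiM

@[simp] lemma ballot_zero_right (n : ℕ) : ballot n 0 = 1 := by
  simp [ballot, Nat.choose_self, Nat.choose_succ_self]

lemma ballot_one (n : ℕ) : ballot n 1 = n := by
  rw [ballot, Nat.choose_succ_self_right, Nat.choose_self]
  omega

lemma ballot_eq_zero {n m : ℕ} (h : n < m) : ballot n m = 0 := by
  rcases Nat.eq_or_lt_of_le h with hEq | hlt
  · -- m = n+1
    rw [ballot, Nat.sub_eq_zero_of_le]
    apply le_of_eq
    rw [show n + m = n + (n + 1) by omega]
    exact (Nat.choose_symm_of_eq_add (by omega)).symm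
  · rw [ballot, Nat.sub_eq_zero_of_le]
    apply Nat.choose_le_succ_of_lt_half_left
    omega

lemma ballot_pascal {n m : ℕ} (h : m ≤ n) :
    ballot (n + 1) (m + 1) = ballot (n + 1) m + ballot n (m + 1) := by
  have e1 : (n + 1) + (m + 1) = (n + m + 1) + 1 := by ring
  have e2 : (n + 1) + m = n + m + 1 := by ring
  have e3 : n + (m + 1) = n + m + 1 := by ring
  rw [ballot, ballot, ballot, e1, e2, e3]
  have p1 : (n + m + 1 + 1).choose (n + 1) = (n+m+1).choose n + (n+m+1).choose (n+1) :=
    Nat.choose_succ_succ (n + m + 1) n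
  have p2 : (n + m + 1 + 1).choose (n + 1 + 1) = (n+m+1).choose (n+1) + (n+m+1).choose (n+1+1) :=
    Nat.choose_succ_succ (n + m + 1) (n + 1)
  have h1 : (n+m+1).choose (n+1) ≤ (n+m+1).choose n := choose_anti (by omega)
  have h2 : (n+m+1).choose (n+1+1) ≤ (n+m+1).choose (n+1) := choose_anti (by omega)
  omega

end VProof
namespace VProof
open Finset

/-- generic weighted sum of a row of ballot numbers -/
noncomputable def SW (w : ℕ → ℚ) (n m : ℕ) : ℚ :=
  ∑ j ∈ Finset.range (m + 1), (ballot n (m - j) : ℚ) * w j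

lemma SW_pascal (w : ℕ → ℚ) {n m : ℕ} (h : m ≤ n) :
    SW w (n + 1) (m + 1) = SW w (n + 1) m + SW w n (m + 1) := by
  rw [SW, SW, SW, Finset.sum_range_succ (n := m + 1), Finset.sum_range_succ (n := m + 1)]
  have key : ∀ j ∈ Finset.range (m + 1),
      (ballot (n+1) (m + 1 - j) : ℚ) * w j
        = (ballot (n+1) (m - j) : ℚ) * w j + (ballot n (m + 1 - j) : ℚ) * w j := by
    intro j hj
    rw [Finset.mem_range] at hj
    have hj' : j ≤ m := by omega
    have e : m + 1 - j = (m - j) + 1 := by omega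
    rw [e, ballot_pascal (le_trans (Nat.sub_le m j) h)]
    push_cast
    ring
  rw [Finset.sum_congr rfl key, Finset.sum_add_distrib]
  simp only [Nat.sub_self, ballot_zero_right, Nat.cast_one, one_mul]
  ring

lemma SW_shift (w : ℕ → ℚ) {n m : ℕ} (h : n ≤ m) :
    SW w n (m + 1) = SW (fun t => w (t + 1)) n m := by
  rw [SW, SW, Finset.sum_range_succ']
  have h0 : (ballot n (m + 1 - 0) : ℚ) * w 0 = 0 := by
    rw [ballot_eq_zero (by omega)]
    simp
  rw [h0, add_zero]
  refine Finset.sum_congr rfl fun j hj => ?_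
  have e : m + 1 - (j + 1) = m - j := by omega
  rw [e]

lemma SW_rec2 (w : ℕ → ℚ) {n m : ℕ} (h : m < n) :
    SW w (n + 2) (m + 2)
      = SW w (n + 2) m + SW w n (m + 2) + 2 * SW w (n + 1) (m + 1) := by
  have e1 := SW_pascal w (n := n + 1) (m := m + 1) (by omega)
  have e2 := SW_pascal w (n := n + 1) (m := m) (by omega)
  have e3 := SW_pascal w (n := n) (m := m + 1) (by omega)
  rw [e1, e2, e3]
  ring

lemma SW_linear (w w1 w2 : ℕ → ℚ) (c : ℚ) (n m : ℕ)
    (hw : ∀ t, w t = c * w1 t + w2 t) :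
    SW w n m = c * SW w1 n m + SW w2 n m := by
  simp only [SW, Finset.mul_sum, ← Finset.sum_add_distrib]
  refine Finset.sum_congr rfl fun j _ => ?_
  rw [hw j]
  ring

lemma SW_geom_shift (b : ℚ) (n m : ℕ) :
    SW (fun t => b ^ (t + 1)) n m = b * SW (fun t => b ^ t) n m := by
  rw [SW, SW, Finset.mul_sum]
  refine Finset.sum_congr rfl fun j _ => ?_
  rw [pow_succ]
  ring

/-- the `h = 0` identity for the "true" component -/
lemma id_It (w : ℕ → ℚ) (k : ℕ) :
    SW w (k + 2) (k + 2)
      = SW w (k + 2) k + SW w (k + 1) (k + 1) + SW (fun t => w (t + 1)) (k + 1) (k + 1) := by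
  have e1 := SW_pascal w (n := k + 1) (m := k + 1) (by omega)
  have e2 := SW_pascal w (n := k + 1) (m := k) (by omega)
  have e3 := SW_shift w (n := k + 1) (m := k + 1) (by omega)
  rw [e1, e2, e3]

/-- the `h = 0` identity used for the "false" component -/
lemma id_C (w : ℕ → ℚ) (n : ℕ) :
    SW w (n + 1) (n + 2)
      = SW (fun t => w (t + 1)) (n + 1) n + SW (fun t => w (t + 1)) n (n + 1) := by
  rw [SW_shift w (n := n + 1) (m := n + 1) (by omega),
    SW_pascal (fun t => w (t + 1)) (n := n) (m := n) (by omega)]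

end VProof
namespace VProof
open Finset

/-- weighted sum over symbols `0..s` -/
noncomputable def Pf (α β : ℚ) (s : ℕ) : ℚ :=
  ∑ i ∈ Finset.range (s + 1), α⁻¹ ^ i * β⁻¹ ^ (s - i)

@[simp] lemma Pf_zero (α β : ℚ) : Pf α β 0 = 1 := by simp [Pf]

lemma Pf_succ (α β : ℚ) (s : ℕ) :
    Pf α β (s + 1) = α⁻¹ * Pf α β s + β⁻¹ ^ (s + 1) := by
  rw [Pf, Pf, Finset.sum_range_succ', Finset.mul_sum]
  congr 1
  · refine Finset.sum_congr rfl fun i hi => ?_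
    have e : s + 1 - (i + 1) = s - i := by omega
    rw [e, pow_succ]
    ring
  · simp

lemma SW_zero (w : ℕ → ℚ) (n : ℕ) : SW w n 0 = w 0 := by
  simp [SW]

lemma SW_one (w : ℕ → ℚ) (n : ℕ) : SW w n 1 = n * w 0 + w 1 := by
  rw [SW]
  rw [Finset.sum_range_succ, Finset.sum_range_succ, Finset.sum_range_zero]
  rw [show (1:ℕ) - 0 = 1 from rfl, Nat.sub_self, ballot_one, ballot_zero_right]
  push_cast
  ring

lemma Wsum_neg (α β : ℚ) (k : ℕ) (h : ℤ) (sb : Bool) (hh : h < 0) :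
    Wsum α β k h sb = 0 := by
  rw [Wsum]
  refine Finset.sum_eq_zero fun f _ => ?_
  rw [if_neg]
  rintro ⟨h1, -⟩
  have := h1 0
  simp at this
  omega

/-- `Wsum` with natural-number height. -/
noncomputable def Wn (α β : ℚ) (k h : ℕ) (sb : Bool) : ℚ := Wsum α β k (h : ℤ) sb

lemma Wn_zero (α β : ℚ) (h : ℕ) (sb : Bool) :
    Wn α β 0 h sb = if h = 0 then 1 else 0 := by
  rw [Wn, Wsum_zero]
  simp

lemma rec0t (α β : ℚ) (k : ℕ) :
    Wn α β (k+1) 0 true = Wn α β k 1 true + Wn α β k 0 true + β⁻¹ * Wn α β k 0 true := by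
  simp only [Wn, Nat.cast_zero, Nat.cast_one]
  rw [Wsum_succ α β k 0 true le_rfl]
  rw [Wsum_neg α β k (0 - 1) true (by norm_num)]
  norm_num

lemma rec0f (α β : ℚ) (k : ℕ) :
    Wn α β (k+1) 0 false
      = α⁻¹ * Wn α β k 1 false + α⁻¹ * Wn α β k 0 false + β⁻¹ * Wn α β k 0 true := by
  simp only [Wn, Nat.cast_zero, Nat.cast_one]
  rw [Wsum_succ α β k 0 false le_rfl]
  rw [Wsum_neg α β k (0 - 1) false (by norm_num)]
  norm_num

lemma recp (α β : ℚ) (k h : ℕ) (sb : Bool) :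
    Wn α β (k+1) (h+1) sb
      = Wn α β k (h+2) sb + Wn α β k h sb + 2 * Wn α β k (h+1) sb := by
  simp only [Wn]
  rw [Wsum_succ α β k ((h+1 : ℕ) : ℤ) sb (by positivity)]
  have hne : ¬ (((h+1 : ℕ) : ℤ) = 0) := by push_cast; omega
  rw [if_neg (by tauto), if_neg hne]
  rw [show ((h+1 : ℕ) : ℤ) + 1 = ((h+2 : ℕ) : ℤ) by push_cast; ring]
  rw [show ((h+1 : ℕ) : ℤ) - 1 = ((h : ℕ) : ℤ) by push_cast; ring]
  ring

lemma Wn_gt (α β : ℚ) : ∀ k h : ℕ, k < h → ∀ sb, Wn α β k h sb = 0 := by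
  intro k
  induction k with
  | zero =>
    intro h hh sb
    rw [Wn_zero, if_neg (by omega)]
  | succ k IH =>
    intro h hh sb
    match h, hh with
    | h + 1, hh =>
      rw [recp, IH (h+2) (by omega), IH h (by omega), IH (h+1) (by omega)]
      ring

end VProof
namespace VProof
open Finset

lemma main_formula (α β : ℚ) : ∀ k h : ℕ, h ≤ k →
    Wn α β k h true = SW (fun j => β⁻¹ ^ j) (k + h) (k - h) ∧
    Wn α β k h false = SW (Pf α β) (k + h - 1) (k - h) := by
  intro k
  induction k with
  | zero =>
    intro h hh
    have h0 : h = 0 := Nat.le_zero.mp hh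
    subst h0
    rw [Wn_zero, Wn_zero]
    constructor <;> simp [SW]
  | succ k IH =>
    intro h hh
    cases h with
    | zero =>
      cases k with
      | zero =>
        constructor
        · rw [rec0t, Wn_gt α β 0 1 (by omega), Wn_zero]
          rw [show (0:ℕ)+1+0 = 1 from rfl, show (0:ℕ)+1-0 = 1 from rfl, SW_one]
          norm_num
        · rw [rec0f, Wn_gt α β 0 1 (by omega), Wn_zero, Wn_zero]
          rw [show (0:ℕ)+1+0-1 = 0 from rfl, show (0:ℕ)+1-0 = 1 from rfl, SW_one]
          norm_num [Pf, Finset.sum_range_succ]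
          ring
      | succ k' =>
        have IH1t := (IH 1 (by omega)).1
        have IH0t := (IH 0 (by omega)).1
        have IH1f := (IH 1 (by omega)).2
        have IH0f := (IH 0 (by omega)).2
        constructor
        · rw [rec0t, IH1t, IH0t]
          simp only [Nat.add_zero, Nat.sub_zero, Nat.add_sub_cancel]
          rw [show k'+1+1 = k'+2 from rfl]
          rw [id_It (fun j => β⁻¹ ^ j) k']
          congr 1
          exact (SW_geom_shift β⁻¹ (k'+1) (k'+1)).symm
        · rw [rec0f, IH1f, IH0f, IH0t]
          simp only [Nat.add_zero, Nat.sub_zero, Nat.add_sub_cancel]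
          rw [show k'+1+1 = k'+2 from rfl, show k'+2-1 = k'+1 from rfl]
          rw [id_C (Pf α β) k']
          rw [SW_linear (fun t => Pf α β (t+1)) (Pf α β) (fun t => β⁻¹ ^ (t+1)) α⁻¹
            (k'+1) k' (fun t => by simp only [Pf_succ])]
          rw [SW_linear (fun t => Pf α β (t+1)) (Pf α β) (fun t => β⁻¹ ^ (t+1)) α⁻¹
            k' (k'+1) (fun t => by simp only [Pf_succ])]
          have hp := SW_pascal (fun t => β⁻¹ ^ (t+1)) (n := k') (m := k') le_rfl
          have hg := SW_geom_shift β⁻¹ (k'+1) (k'+1)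
          linear_combination hp - hg
    | succ h' =>
      rcases Nat.lt_or_ge (h' + 2) (k + 1) with hlt | hge
      · -- h' + 2 ≤ k
        obtain ⟨d, hd⟩ : ∃ d, k = h' + 2 + d := ⟨k - (h'+2), by omega⟩
        constructor
        · rw [recp, (IH (h'+2) (by omega)).1, (IH h' (by omega)).1,
            (IH (h'+1) (by omega)).1]
          rw [show k+(h'+2) = 2*h'+2+d+2 from by omega,
            show k-(h'+2) = d from by omega,
            show k+h' = 2*h'+2+d from by omega,
            show k-h' = d+2 from by omega,
            show k+(h'+1) = 2*h'+2+d+1 from by omega,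
            show k-(h'+1) = d+1 from by omega,
            show k+1+(h'+1) = 2*h'+2+d+2 from by omega,
            show k+1-(h'+1) = d+2 from by omega]
          rw [SW_rec2 (fun j => β⁻¹ ^ j) (n := 2*h'+2+d) (m := d) (by omega)]
        · rw [recp, (IH (h'+2) (by omega)).2, (IH h' (by omega)).2,
            (IH (h'+1) (by omega)).2]
          rw [show k+(h'+2)-1 = 2*h'+1+d+2 from by omega,
            show k-(h'+2) = d from by omega,
            show k+h'-1 = 2*h'+1+d from by omega,
            show k-h' = d+2 from by omega,
            show k+(h'+1)-1 = 2*h'+1+d+1 from by omega,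
            show k-(h'+1) = d+1 from by omega,
            show k+1+(h'+1)-1 = 2*h'+1+d+2 from by omega,
            show k+1-(h'+1) = d+2 from by omega]
          rw [SW_rec2 (Pf α β) (n := 2*h'+1+d) (m := d) (by omega)]
      · rcases Nat.lt_or_ge k (h' + 1) with hk | hk
        · -- h' + 1 = k + 1, i.e. h' = k
          have hk' : h' = k := by omega
          subst hk'
          constructor
          · rw [recp, Wn_gt α β h' (h'+2) (by omega), Wn_gt α β h' (h'+1) (by omega),
              (IH h' le_rfl).1]
            rw [show h'+h' = 2*h' from by omega, show h'-h' = 0 from by omega,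
              show h'+1+(h'+1) = 2*h'+2 from by omega,
              show h'+1-(h'+1) = 0 from by omega]
            rw [SW_zero, SW_zero]
            ring
          · rw [recp, Wn_gt α β h' (h'+2) (by omega), Wn_gt α β h' (h'+1) (by omega),
              (IH h' le_rfl).2]
            rw [show h'+h'-1 = 2*h'-1 from by omega, show h'-h' = 0 from by omega,
              show h'+1+(h'+1)-1 = 2*h'+1 from by omega,
              show h'+1-(h'+1) = 0 from by omega]
            rw [SW_zero, SW_zero]
            ring
        · -- h' + 1 = k
          have hk' : k = h' + 1 := by omega
          subst hk'
          constructor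
          · rw [recp, Wn_gt α β (h'+1) (h'+2) (by omega),
              (IH h' (by omega)).1, (IH (h'+1) le_rfl).1]
            rw [show h'+1+h' = 2*h'+1 from by omega, show h'+1-h' = 1 from by omega,
              show h'+1+(h'+1) = 2*h'+2 from by omega,
              show h'+1-(h'+1) = 0 from by omega,
              show h'+1+1+(h'+1) = 2*h'+3 from by omega,
              show h'+1+1-(h'+1) = 1 from by omega]
            rw [SW_one, SW_one, SW_zero]
            push_cast
            ring
          · rw [recp, Wn_gt α β (h'+1) (h'+2) (by omega),
              (IH h' (by omega)).2, (IH (h'+1) le_rfl).2]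
            rw [show h'+1+h'-1 = 2*h' from by omega, show h'+1-h' = 1 from by omega,
              show h'+1+(h'+1)-1 = 2*h'+1 from by omega,
              show h'+1-(h'+1) = 0 from by omega,
              show h'+1+1+(h'+1)-1 = 2*h'+2 from by omega,
              show h'+1+1-(h'+1) = 1 from by omega]
            rw [SW_one, SW_one, SW_zero]
            push_cast
            ring

end VProof

namespace VProof
open Finset

lemma reindex' (a b : ℚ) (k : ℕ) :
    ∑ s ∈ Finset.range (k+1),
        (ballot (k-1) (k-s) : ℚ) * (∑ i ∈ Finset.range (s+1), a ^ i * b ^ (s - i))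
      = ∑ i ∈ Finset.range (k+1), ∑ j ∈ Finset.range (k - i + 1),
          (ballot (k-1) (k-i-j) : ℚ) * a ^ i * b ^ j := by
  simp only [Finset.mul_sum]
  rw [Finset.sum_sigma', Finset.sum_sigma']
  refine Finset.sum_nbij' (fun p => ⟨p.2, p.1 - p.2⟩) (fun p => ⟨p.1 + p.2, p.1⟩)
    ?_ ?_ ?_ ?_ ?_
  · rintro ⟨s, i⟩ hp
    simp only [Finset.mem_sigma, Finset.mem_range] at hp ⊢
    omega
  · rintro ⟨i, j⟩ hp
    simp only [Finset.mem_sigma, Finset.mem_range] at hp ⊢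
    omega
  · rintro ⟨s, i⟩ hp
    simp only [Finset.mem_sigma, Finset.mem_range] at hp
    show (⟨i + (s - i), i⟩ : (_ : ℕ) × ℕ) = ⟨s, i⟩
    rw [show i + (s - i) = s from by omega]
  · rintro ⟨i, j⟩ hp
    simp only [Finset.mem_sigma, Finset.mem_range] at hp
    show (⟨i, i + j - i⟩ : (_ : ℕ) × ℕ) = ⟨i, j⟩
    rw [show i + j - i = j from by omega]
  · rintro ⟨s, i⟩ hp
    simp only [Finset.mem_sigma, Finset.mem_range] at hp
    show (ballot (k-1) (k-s) : ℚ) * (a ^ i * b ^ (s - i))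
      = (ballot (k-1) (k - i - (s - i)) : ℚ) * a ^ i * b ^ (s - i)
    rw [show k - i - (s - i) = k - s from by omega]
    ring

theorem V_eq' (k : ℕ) (α β : ℚ) :
    V k α β
      = ∑ i ∈ Finset.range (k + 1), ∑ j ∈ Finset.range (k - i + 1),
          (ballot (k - 1) (k - i - j) : ℚ) * α⁻¹ ^ i * β⁻¹ ^ j := by
  have h1 : V k α β = Wn α β k 0 false := by
    rw [Wn, Wsum, V]
    refine Finset.sum_congr rfl fun f _ => ?_
    simp [IsMotzkin, valid]
    congr 1
  have h2 := (main_formula α β k 0 (Nat.zero_le k)).2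
  rw [h1, h2]
  simp only [Nat.add_zero, Nat.sub_zero]
  rw [SW]
  simp only [Pf]
  exact reindex' α⁻¹ β⁻¹ k

end VProof

/-- `V_k(α,β) = ∑_{i=0}^k ∑_{j=0}^{k-i} C^{k-1}_{k-i-j} α^{-i} β^{-j}`. -/
theorem V_eq (k : ℕ) (α β : ℚ) (hα : α ≠ 0) (hβ : β ≠ 0) :
    V k α β
      = ∑ i ∈ Finset.range (k + 1), ∑ j ∈ Finset.range (k - i + 1),
          (ballot (k - 1) (k - i - j) : ℚ) * α⁻¹ ^ i * β⁻¹ ^ j :=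
  VProof.V_eq' k α β
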